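/- There exists a constant C > 0 such that for every continuously differentiable function f : ℝ³ → ℝ with compact support, ‖f‖_{L⁴(ℝ³)} ≤ C ‖∇f‖_{L²(ℝ³)}^{1/2} ‖f‖_{L³(ℝ³)}^{1/2}. -/

import Mathlib

open MeasureTheory

open ENNReal NNReal


theorem aux_sobolev : ∃ C : ℝ≥0, ∀ f : EuclideanSpace ℝ (Fin 3) → ℝ,
    ContDiff ℝ 1 f → HasCompactSupport f →
    eLpNorm f 6 volume ≤ C * eLpNorm (fderiv ℝ f) 2 volume := by
  refine ⟨eLpNormLESNormFDerivOfEqInnerConst (volume : Measure (EuclideanSpace ℝ (Fin 3))) 2,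
    fun f hf h2f => ?_⟩
  have h := eLpNorm_le_eLpNorm_fderiv_of_eq_inner (μ := volume) hf h2f
    (p := 2) (p' := 6) one_le_two (by simp [finrank_euclideanSpace]) (by
      rw [finrank_euclideanSpace]; push_cast; norm_num)
  exact_mod_cast h

/-- Gagliardo–Nirenberg: `‖f‖_{L⁴(ℝ³)} ≤ C ‖∇f‖_{L²}^{1/2} ‖f‖_{L³}^{1/2}` (Lemma 2.2 instance). -/
theorem stmt_1 :
    ∃ C > 0, ∀ f : EuclideanSpace ℝ (Fin 3) → ℝ,
      ContDiff ℝ 1 f → HasCompactSupport f →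
      (∫ x, |f x| ^ 4) ^ ((1:ℝ)/4) ≤
        C * ((∫ x, ‖fderiv ℝ f x‖ ^ 2) ^ ((1:ℝ)/2)) ^ ((1:ℝ)/2)
          * ((∫ x, |f x| ^ 3) ^ ((1:ℝ)/3)) ^ ((1:ℝ)/2) := by
  obtain ⟨C, hC⟩ := aux_sobolev
  refine ⟨(C:ℝ) ^ ((1:ℝ)/2) + 1, by positivity, fun f hf h2f => ?_⟩
  set μ := (volume : Measure (EuclideanSpace ℝ (Fin 3))) with hμ
  have hfc : Continuous f := hf.continuous
  have hfd : Continuous (fderiv ℝ f) := ContDiff.continuous_fderiv hf one_ne_zero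
  have h2fd : HasCompactSupport (fderiv ℝ f) := h2f.fderiv (𝕜 := ℝ)
  have hfin : ∀ p : ℝ, 0 < p → ∫⁻ x, (‖f x‖₊ : ℝ≥0∞) ^ p ∂μ ≠ ∞ := by
    intro p hp
    refine (lintegral_rpow_enorm_lt_top_of_eLpNorm'_lt_top (f := f) hp ?_).ne
    have heq := eLpNorm_eq_eLpNorm' (f := f) (μ := μ) (p := ENNReal.ofReal p)
      ((ENNReal.ofReal_pos.mpr hp).ne') ENNReal.ofReal_ne_top
    rw [ENNReal.toReal_ofReal hp.le] at heq
    rw [← heq]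
    exact (hfc.memLp_of_hasCompactSupport (μ := μ) h2f).eLpNorm_lt_top
  have hfin2 : ∫⁻ x, (‖fderiv ℝ f x‖₊ : ℝ≥0∞) ^ (2:ℝ) ∂μ ≠ ∞ := by
    refine (lintegral_rpow_enorm_lt_top_of_eLpNorm'_lt_top (f := fderiv ℝ f) (by norm_num) ?_).ne
    have := eLpNorm_eq_eLpNorm' (f := fderiv ℝ f) (μ := μ) (p := 2) (by norm_num) (by norm_num)
    rw [show ((2:ℝ≥0∞).toReal) = (2:ℝ) by norm_num] at this
    rw [← this]
    exact (hfd.memLp_of_hasCompactSupport (μ := μ) h2fd).eLpNorm_lt_top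
  set A := ∫⁻ x, (‖f x‖₊ : ℝ≥0∞) ^ (4:ℝ) ∂μ with hA
  set B := ∫⁻ x, (‖fderiv ℝ f x‖₊ : ℝ≥0∞) ^ (2:ℝ) ∂μ with hB
  set D := ∫⁻ x, (‖f x‖₊ : ℝ≥0∞) ^ (3:ℝ) ∂μ with hD
  set S := ∫⁻ x, (‖f x‖₊ : ℝ≥0∞) ^ (6:ℝ) ∂μ with hS
  -- Hölder
  have holder : A ≤ S ^ ((1:ℝ)/3) * D ^ ((2:ℝ)/3) := by
    have hco : Real.HolderConjugate 3 (3/2) := Real.holderConjugate_iff.mpr ⟨by norm_num, by norm_num⟩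
    have hmeas : AEMeasurable (fun x => (‖f x‖₊ : ℝ≥0∞) ^ (2:ℝ)) μ := by fun_prop
    have h := ENNReal.lintegral_mul_le_Lp_mul_Lq μ hco hmeas hmeas
    calc A = ∫⁻ x, ((‖f x‖₊ : ℝ≥0∞) ^ (2:ℝ)) * ((‖f x‖₊ : ℝ≥0∞) ^ (2:ℝ)) ∂μ := by
            rw [hA]
            refine lintegral_congr fun x => ?_
            rw [← ENNReal.rpow_add_of_nonneg _ _ (by norm_num) (by norm_num)]
            norm_num
      _ ≤ (∫⁻ x, ((‖f x‖₊ : ℝ≥0∞) ^ (2:ℝ)) ^ (3:ℝ) ∂μ) ^ (1/(3:ℝ))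
          * (∫⁻ x, ((‖f x‖₊ : ℝ≥0∞) ^ (2:ℝ)) ^ ((3:ℝ)/2) ∂μ) ^ (1/((3:ℝ)/2)) := by
            simpa [Pi.mul_apply] using h
      _ = S ^ ((1:ℝ)/3) * D ^ ((2:ℝ)/3) := by
            congr 1
            · congr 1
              refine lintegral_congr fun x => ?_
              rw [← ENNReal.rpow_mul]; norm_num
            · rw [show (1/((3:ℝ)/2)) = (2:ℝ)/3 by norm_num]
              congr 1
              refine lintegral_congr fun x => ?_
              rw [← ENNReal.rpow_mul]; norm_num
  -- Sobolev
  have sob : S ^ ((1:ℝ)/6) ≤ (C : ℝ≥0∞) * B ^ ((1:ℝ)/2) := by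
    have h := hC f hf h2f
    rw [eLpNorm_eq_lintegral_rpow_enorm_toReal (by norm_num) (by norm_num),
      eLpNorm_eq_lintegral_rpow_enorm_toReal (by norm_num) (by norm_num)] at h
    rw [show ((6:ℝ≥0∞).toReal) = (6:ℝ) by norm_num,
      show ((2:ℝ≥0∞).toReal) = (2:ℝ) by norm_num] at h
    exact h
  -- combine in ℝ≥0∞
  have key : A ^ ((1:ℝ)/4) ≤ (C : ℝ≥0∞) ^ ((1:ℝ)/2) * (B ^ ((1:ℝ)/2)) ^ ((1:ℝ)/2)
      * (D ^ ((1:ℝ)/3)) ^ ((1:ℝ)/2) := by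
    calc A ^ ((1:ℝ)/4) ≤ (S ^ ((1:ℝ)/3) * D ^ ((2:ℝ)/3)) ^ ((1:ℝ)/4) := by
          gcongr
      _ = (S ^ ((1:ℝ)/6)) ^ ((1:ℝ)/2) * (D ^ ((1:ℝ)/3)) ^ ((1:ℝ)/2) := by
          rw [ENNReal.mul_rpow_of_nonneg _ _ (by norm_num), ← ENNReal.rpow_mul,
            ← ENNReal.rpow_mul, ← ENNReal.rpow_mul, ← ENNReal.rpow_mul]
          norm_num
      _ ≤ ((C : ℝ≥0∞) * B ^ ((1:ℝ)/2)) ^ ((1:ℝ)/2) * (D ^ ((1:ℝ)/3)) ^ ((1:ℝ)/2) := by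
          gcongr
      _ = (C : ℝ≥0∞) ^ ((1:ℝ)/2) * (B ^ ((1:ℝ)/2)) ^ ((1:ℝ)/2) * (D ^ ((1:ℝ)/3)) ^ ((1:ℝ)/2) := by
          rw [ENNReal.mul_rpow_of_nonneg _ _ (by norm_num)]
  -- convert integrals
  have conv4 : ∫ x, |f x| ^ 4 ∂μ = A.toReal := by
    rw [integral_eq_lintegral_of_nonneg_ae (f := fun x => |f x| ^ 4) (ae_of_all _ fun x => by positivity)
      ((hfc.abs.pow 4).aestronglyMeasurable)]
    congr 1
    refine lintegral_congr fun x => ?_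
    rw [ENNReal.ofReal_pow (abs_nonneg _), ← Real.enorm_eq_ofReal_abs, enorm_eq_nnnorm, ← ENNReal.rpow_natCast]
    norm_num
  have conv3 : ∫ x, |f x| ^ 3 ∂μ = D.toReal := by
    rw [integral_eq_lintegral_of_nonneg_ae (f := fun x => |f x| ^ 3) (ae_of_all _ fun x => by positivity)
      ((hfc.abs.pow 3).aestronglyMeasurable)]
    congr 1
    refine lintegral_congr fun x => ?_
    rw [ENNReal.ofReal_pow (abs_nonneg _), ← Real.enorm_eq_ofReal_abs, enorm_eq_nnnorm, ← ENNReal.rpow_natCast]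
    norm_num
  have conv2 : ∫ x, ‖fderiv ℝ f x‖ ^ 2 ∂μ = B.toReal := by
    rw [integral_eq_lintegral_of_nonneg_ae (f := fun x => ‖fderiv ℝ f x‖ ^ 2) (ae_of_all _ fun x => by positivity)
      ((hfd.norm.pow 2).aestronglyMeasurable)]
    congr 1
    refine lintegral_congr fun x => ?_
    rw [ENNReal.ofReal_pow (norm_nonneg _), ofReal_norm, enorm_eq_nnnorm, ← ENNReal.rpow_natCast]
    norm_num
  rw [conv4, conv3, conv2]
  have hRfin : (C : ℝ≥0∞) ^ ((1:ℝ)/2) * (B ^ ((1:ℝ)/2)) ^ ((1:ℝ)/2)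
      * (D ^ ((1:ℝ)/3)) ^ ((1:ℝ)/2) ≠ ∞ := by
    apply ENNReal.mul_ne_top (ENNReal.mul_ne_top _ _) _
    · exact ENNReal.rpow_ne_top_of_nonneg (by norm_num) ENNReal.coe_ne_top
    · exact ENNReal.rpow_ne_top_of_nonneg (by norm_num)
        (ENNReal.rpow_ne_top_of_nonneg (by norm_num) hfin2)
    · exact ENNReal.rpow_ne_top_of_nonneg (by norm_num)
        (ENNReal.rpow_ne_top_of_nonneg (by norm_num) (hfin 3 (by norm_num)))
  have hfinal := ENNReal.toReal_mono hRfin key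
  simp only [ENNReal.toReal_mul, ← ENNReal.toReal_rpow] at hfinal
  refine hfinal.trans ?_
  have hX : (0:ℝ) ≤ (B.toReal ^ ((1:ℝ)/2)) ^ ((1:ℝ)/2) := by positivity
  have hY : (0:ℝ) ≤ (D.toReal ^ ((1:ℝ)/3)) ^ ((1:ℝ)/2) := by positivity
  have h1 : (C : ℝ≥0∞).toReal ^ ((1:ℝ)/2) ≤ (C:ℝ) ^ ((1:ℝ)/2) + 1 := by
    simp only [ENNReal.coe_toReal]
    linarith
  exact mul_le_mul_of_nonneg_right (mul_le_mul_of_nonneg_right h1 hX) hY
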